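/- arXiv:1112.4951 — 3 statements merged into one kernel-verified Lean document; each statement's English description precedes it below -/
import Mathlib

section
/- (Guaranteed improvement of within-stratum centered calibration under sampling without replacement.) The matrix Σ − Σ_cc = Σ_{j=1}^J ν_j((1−p_j)/p_j) Var_{0|j}(Q_cc^{(j)}ℓ̃₀) is positive semidefinite; equivalently, for every vector a ∈ ℝ^p, aᵀ Σ_cc a ≤ aᵀ Σ a. -/
open MeasureTheory ProbabilityTheory Finset Matrix

private lemma integrable_mul_of_memL2 {α : Type*} [MeasurableSpace α] {μ : Measure α}
    {f g : α → ℝ} (hf : MemLp f 2 μ) (hg : MemLp g 2 μ) :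
    Integrable (fun x => f x * g x) μ := by
  have h1 := (hf.add hg).integrable_sq
  have h2 := hf.integrable_sq
  have h3 := hg.integrable_sq
  have he : (fun x => f x * g x)
      = fun x => (((f + g) x ^ 2 - f x ^ 2) - g x ^ 2) / 2 := by
    funext x; simp only [Pi.add_apply]; ring
  rw [he]
  exact ((h1.sub h2).sub h3).div_const 2

private lemma stratum_key
    {Ω : Type*} [MeasurableSpace Ω] {κ : Measure Ω} [IsProbabilityMeasure κ]
    {p k : ℕ} (ℓ : Ω → Fin p → ℝ) (hℓ : ∀ a, MemLp (fun ω => ℓ ω a) 2 κ)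
    (Z : Ω → Fin k → ℝ) (hZmeas : ∀ a, Measurable fun ω => Z ω a)
    (CZ : ℝ) (hZbd : ∀ ω a, |Z ω a| ≤ CZ)
    (μZ : Fin k → ℝ) (hμZ : ∀ a, μZ a = ∫ ω, Z ω a ∂κ)
    (A : Matrix (Fin k) (Fin k) ℝ)
    (hA : ∀ a b, A a b = ∫ ω, (Z ω a - μZ a) * (Z ω b - μZ b) ∂κ)
    (hAinv : IsUnit A.det)
    (Q : Ω → Fin p → ℝ)
    (hQae : ∀ a, (fun ω => Q ω a) =ᵐ[κ] fun ω =>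
      ∑ b, ∑ c, (∫ ω', ℓ ω' a * (Z ω' b - μZ b) ∂κ) * A⁻¹ b c * (Z ω c - μZ c)) :
    ∃ M : Matrix (Fin p) (Fin p) ℝ,
      (∀ a b, ((∫ ω, ℓ ω a * ℓ ω b ∂κ) - (∫ ω, ℓ ω a ∂κ) * (∫ ω, ℓ ω b ∂κ))
        - ((∫ ω, (ℓ ω a - Q ω a) * (ℓ ω b - Q ω b) ∂κ)
            - (∫ ω, ℓ ω a - Q ω a ∂κ) * (∫ ω, ℓ ω b - Q ω b ∂κ)) = M a b)
      ∧ (∀ a b, M a b = M b a)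
      ∧ ∀ x : Fin p → ℝ, 0 ≤ ∑ a, ∑ b, x a * M a b * x b := by
  classical
  -- integrability facts
  have hZm : ∀ c, Measurable fun ω => Z ω c - μZ c := fun c => (hZmeas c).sub_const _
  have hZint : ∀ c, Integrable (fun ω => Z ω c) κ := by
    intro c
    refine (memLp_top_of_bound (hZmeas c).aestronglyMeasurable CZ
      (Filter.Eventually.of_forall fun ω => ?_)).integrable le_top
    simpa [Real.norm_eq_abs] using hZbd ω c
  have izc : ∀ c, Integrable (fun ω => Z ω c - μZ c) κ :=
    fun c => (hZint c).sub (integrable_const _)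
  have zbd : ∀ c ω, ‖Z ω c - μZ c‖ ≤ CZ + |μZ c| := by
    intro c ω
    calc ‖Z ω c - μZ c‖ ≤ |Z ω c| + |μZ c| := by
          simpa [Real.norm_eq_abs] using abs_sub (Z ω c) (μZ c)
      _ ≤ CZ + |μZ c| := add_le_add_left (hZbd ω c) _
  have iℓ : ∀ a, Integrable (fun ω => ℓ ω a) κ := fun a => (hℓ a).integrable one_le_two
  have iℓℓ : ∀ a b, Integrable (fun ω => ℓ ω a * ℓ ω b) κ :=
    fun a b => integrable_mul_of_memL2 (hℓ a) (hℓ b)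
  have iℓz : ∀ a c, Integrable (fun ω => ℓ ω a * (Z ω c - μZ c)) κ := by
    intro a c
    have h := (iℓ a).bdd_mul (c := CZ + |μZ c|) (hZm c).aestronglyMeasurable (Filter.Eventually.of_forall fun ω => zbd c ω)
    exact h.congr (Filter.Eventually.of_forall fun ω => mul_comm _ _)
  have izz : ∀ c d, Integrable (fun ω => (Z ω c - μZ c) * (Z ω d - μZ d)) κ :=
    fun c d => (izc d).bdd_mul (c := CZ + |μZ c|) (hZm c).aestronglyMeasurable (Filter.Eventually.of_forall fun ω => zbd c ω)
  have hz0 : ∀ c, ∫ ω, (Z ω c - μZ c) ∂κ = 0 := by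
    intro c
    rw [integral_sub (hZint c) (integrable_const _), integral_const]
    simp [hμZ c]
  -- matrix facts
  set B : Matrix (Fin k) (Fin k) ℝ := A⁻¹ with hB
  have hAsymm : Aᵀ = A := by
    ext a b
    rw [Matrix.transpose_apply, hA, hA]
    exact integral_congr_ae (Filter.Eventually.of_forall fun ω => mul_comm _ _)
  have hBsymm : Bᵀ = B := by rw [hB, Matrix.transpose_nonsing_inv, hAsymm]
  have hAe : ∀ x y, A x y = A y x := fun x y => by
    simpa using congrFun (congrFun hAsymm y) x
  have hBe : ∀ x y, B x y = B y x := fun x y => by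
    simpa using congrFun (congrFun hBsymm y) x
  have hBA : B * A = 1 := Matrix.nonsing_inv_mul _ hAinv
  -- the fundamental algebraic identity
  set C : Fin p → Fin k → ℝ := fun a c => ∫ ω, ℓ ω a * (Z ω c - μZ c) ∂κ with hC
  set D : Fin p → Fin k → ℝ := fun a f => ∑ e, C a e * B e f with hD
  have hKey : ∀ (v : Fin k → ℝ) (f : Fin k), ∑ f', (∑ e, v e * B e f') * A f f' = v f := by
    intro v f
    calc ∑ f', (∑ e, v e * B e f') * A f f'
        = ∑ f', ∑ e, v e * (B e f' * A f' f) := by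
          refine Finset.sum_congr rfl fun f' _ => ?_
          rw [Finset.sum_mul]
          exact Finset.sum_congr rfl fun e _ => by rw [hAe f f']; ring
      _ = ∑ e, v e * ∑ f', B e f' * A f' f := by
          rw [Finset.sum_comm]
          exact Finset.sum_congr rfl fun e _ => by rw [Finset.mul_sum]
      _ = ∑ e, v e * (B * A) e f := by
          refine Finset.sum_congr rfl fun e _ => ?_
          rw [Matrix.mul_apply]
      _ = v f := by
          rw [hBA]
          simp [Matrix.one_apply]
  have hKeyD : ∀ (b : Fin p) (f : Fin k), ∑ f', D b f' * A f f' = C b f := fun b f => by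
    simpa only [hD] using hKey (C b) f
  set M : Matrix (Fin p) (Fin p) ℝ := fun a b => ∑ f, D a f * C b f with hM
  have hMsymm : ∀ a b, M a b = M b a := by
    intro a b
    show ∑ f, D a f * C b f = ∑ f, D b f * C a f
    calc ∑ f, D a f * C b f = ∑ f, ∑ e, (C a e * B e f) * C b f := by
          refine Finset.sum_congr rfl fun f _ => ?_
          rw [hD, Finset.sum_mul]
      _ = ∑ e, ∑ f, (C a e * B e f) * C b f := Finset.sum_comm
      _ = ∑ e, D b e * C a e := by
          refine Finset.sum_congr rfl fun e _ => ?_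
          rw [hD, Finset.sum_mul]
          refine Finset.sum_congr rfl fun f _ => ?_
          rw [hBe e f]; ring
  -- positivity of A-quadratic forms
  have hApsd : ∀ z : Fin k → ℝ, 0 ≤ ∑ f, ∑ f', (z f * z f') * A f f' := by
    intro z
    have heq : ∑ f, ∑ f', (z f * z f') * A f f'
        = ∫ ω, (∑ f, z f * (Z ω f - μZ f)) ^ 2 ∂κ := by
      have h1 : (fun ω => (∑ f, z f * (Z ω f - μZ f)) ^ 2)
          = fun ω => ∑ f, ∑ f', (z f * z f')
              * ((Z ω f - μZ f) * (Z ω f' - μZ f')) := by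
        funext ω
        rw [sq, Finset.sum_mul_sum]
        exact Finset.sum_congr rfl fun f _ => Finset.sum_congr rfl fun f' _ => by ring
      rw [h1, integral_finset_sum _ fun f _ =>
        integrable_finset_sum _ fun f' _ => ((izz f f').const_mul _)]
      refine Finset.sum_congr rfl fun f _ => ?_
      rw [integral_finset_sum _ fun f' _ => ((izz f f').const_mul _)]
      refine Finset.sum_congr rfl fun f' _ => ?_
      rw [integral_const_mul, hA]
    rw [heq]
    exact integral_nonneg fun ω => sq_nonneg _
  have hMpsd : ∀ x : Fin p → ℝ, 0 ≤ ∑ a, ∑ b, x a * M a b * x b := by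
    intro x
    set y : Fin k → ℝ := fun f => ∑ b, x b * C b f with hy
    set u : Fin k → ℝ := fun f => ∑ a, x a * D a f with hu
    have hueq : ∀ f, u f = ∑ e, y e * B e f := by
      intro f
      rw [hu]
      calc ∑ a, x a * D a f = ∑ a, ∑ e, (x a * C a e) * B e f := by
            refine Finset.sum_congr rfl fun a _ => ?_
            rw [hD, Finset.mul_sum]
            exact Finset.sum_congr rfl fun e _ => by ring
        _ = ∑ e, ∑ a, (x a * C a e) * B e f := Finset.sum_comm
        _ = ∑ e, y e * B e f := by
            refine Finset.sum_congr rfl fun e _ => ?_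
            rw [hy, Finset.sum_mul]
    have hyAu : ∀ f, y f = ∑ f', u f' * A f f' := by
      intro f
      conv_lhs => rw [← hKey y f]
      exact Finset.sum_congr rfl fun f' _ => by rw [hueq f']
    have hexp : ∑ a, ∑ b, x a * M a b * x b = ∑ f, u f * y f := by
      calc ∑ a, ∑ b, x a * M a b * x b
          = ∑ a, ∑ b, ∑ f, (x a * D a f) * (x b * C b f) := by
            refine Finset.sum_congr rfl fun a _ => Finset.sum_congr rfl fun b _ => ?_
            show x a * (∑ f, D a f * C b f) * x b = _
            rw [Finset.mul_sum, Finset.sum_mul]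
            exact Finset.sum_congr rfl fun f _ => by ring
        _ = ∑ f, ∑ a, ∑ b, (x a * D a f) * (x b * C b f) := by
            have h1 : ∀ a, ∑ b, ∑ f, (x a * D a f) * (x b * C b f)
                = ∑ f, ∑ b, (x a * D a f) * (x b * C b f) :=
              fun a => Finset.sum_comm
            simp_rw [h1]
            exact Finset.sum_comm
        _ = ∑ f, (∑ a, x a * D a f) * (∑ b, x b * C b f) := by
            refine Finset.sum_congr rfl fun f _ => ?_
            rw [Finset.sum_mul_sum]
        _ = ∑ f, u f * y f := by
            refine Finset.sum_congr rfl fun f _ => ?_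
            rw [hu, hy]
    rw [hexp]
    have : ∑ f, u f * y f = ∑ f, ∑ f', (u f * u f') * A f f' := by
      refine Finset.sum_congr rfl fun f _ => ?_
      rw [hyAu f, Finset.mul_sum]
      exact Finset.sum_congr rfl fun f' _ => by ring
    rw [this]
    exact hApsd u
  -- the linearized Q
  set Lin : Fin p → Ω → ℝ := fun a ω => ∑ f, D a f * (Z ω f - μZ f) with hLin
  have hQae' : ∀ a, (fun ω => Q ω a) =ᵐ[κ] Lin a := by
    intro a
    refine (hQae a).trans (Filter.Eventually.of_forall fun ω => ?_)
    show ∑ b, ∑ c, C a b * B b c * (Z ω c - μZ c) = ∑ f, D a f * (Z ω f - μZ f)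
    rw [Finset.sum_comm]
    refine Finset.sum_congr rfl fun f _ => ?_
    rw [hD, Finset.sum_mul]
  have iLin : ∀ a, Integrable (Lin a) κ :=
    fun a => integrable_finset_sum _ fun f _ => (izc f).const_mul _
  have hℓLin : ∀ a b, (fun ω => ℓ ω a * Lin b ω)
      = fun ω => ∑ f, D b f * (ℓ ω a * (Z ω f - μZ f)) := by
    intro a b
    funext ω
    show ℓ ω a * ∑ f, D b f * (Z ω f - μZ f) = _
    rw [Finset.mul_sum]
    exact Finset.sum_congr rfl fun f _ => by ring
  have iℓLin : ∀ a b, Integrable (fun ω => ℓ ω a * Lin b ω) κ := by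
    intro a b
    rw [hℓLin a b]
    exact integrable_finset_sum _ fun f _ => (iℓz a f).const_mul _
  have hLL : ∀ a b, (fun ω => Lin a ω * Lin b ω)
      = fun ω => ∑ f, ∑ f', (D a f * D b f')
          * ((Z ω f - μZ f) * (Z ω f' - μZ f')) := by
    intro a b
    funext ω
    show (∑ f, D a f * (Z ω f - μZ f)) * (∑ f, D b f * (Z ω f - μZ f)) = _
    rw [Finset.sum_mul_sum]
    exact Finset.sum_congr rfl fun f _ => Finset.sum_congr rfl fun f' _ => by ring
  have iLL : ∀ a b, Integrable (fun ω => Lin a ω * Lin b ω) κ := by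
    intro a b
    rw [hLL a b]
    exact integrable_finset_sum _ fun f _ =>
      integrable_finset_sum _ fun f' _ => (izz f f').const_mul _
  -- integral identities
  have II3 : ∀ a, ∫ ω, Lin a ω ∂κ = 0 := by
    intro a
    show ∫ ω, ∑ f, D a f * (Z ω f - μZ f) ∂κ = 0
    rw [integral_finset_sum _ fun f _ => (izc f).const_mul _]
    refine Finset.sum_eq_zero fun f _ => ?_
    rw [integral_const_mul, hz0, mul_zero]
  have II1 : ∀ a b, ∫ ω, ℓ ω a * Lin b ω ∂κ = M b a := by
    intro a b
    rw [hℓLin a b, integral_finset_sum _ fun f _ => (iℓz a f).const_mul _]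
    show _ = ∑ f, D b f * C a f
    refine Finset.sum_congr rfl fun f _ => ?_
    rw [integral_const_mul]
  have II2 : ∀ a b, ∫ ω, Lin a ω * Lin b ω ∂κ = M a b := by
    intro a b
    rw [hLL a b, integral_finset_sum _ fun f _ =>
      integrable_finset_sum _ fun f' _ => (izz f f').const_mul _]
    calc ∑ f, ∫ ω, ∑ f', (D a f * D b f') * ((Z ω f - μZ f) * (Z ω f' - μZ f')) ∂κ
        = ∑ f, ∑ f', (D a f * D b f') * A f f' := by
          refine Finset.sum_congr rfl fun f _ => ?_
          rw [integral_finset_sum _ fun f' _ => (izz f f').const_mul _]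
          refine Finset.sum_congr rfl fun f' _ => ?_
          rw [integral_const_mul, hA]
      _ = ∑ f, D a f * (∑ f', D b f' * A f f') := by
          refine Finset.sum_congr rfl fun f _ => ?_
          rw [Finset.mul_sum]
          exact Finset.sum_congr rfl fun f' _ => by ring
      _ = M a b := by
          show _ = ∑ f, D a f * C b f
          refine Finset.sum_congr rfl fun f _ => ?_
          rw [hKeyD b f]
  -- finish
  refine ⟨M, fun a b => ?_, hMsymm, hMpsd⟩
  have e1 : ∫ ω, (ℓ ω a - Q ω a) * (ℓ ω b - Q ω b) ∂κ
      = (∫ ω, ℓ ω a * ℓ ω b ∂κ) - M b a - M a b + M a b := by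
    have hcongr : (fun ω => (ℓ ω a - Q ω a) * (ℓ ω b - Q ω b)) =ᵐ[κ]
        (fun ω => ℓ ω a * ℓ ω b - ℓ ω a * Lin b ω - ℓ ω b * Lin a ω
          + Lin a ω * Lin b ω) := by
      filter_upwards [hQae' a, hQae' b] with ω h1 h2
      rw [h1, h2]; ring
    have ha1 : Integrable (fun ω => ℓ ω a * ℓ ω b - ℓ ω a * Lin b ω) κ :=
      (iℓℓ a b).sub (iℓLin a b)
    have ha2 : Integrable
        (fun ω => ℓ ω a * ℓ ω b - ℓ ω a * Lin b ω - ℓ ω b * Lin a ω) κ :=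
      ha1.sub (iℓLin b a)
    rw [integral_congr_ae hcongr, integral_add ha2 (iLL a b),
      integral_sub ha1 (iℓLin b a),
      integral_sub (iℓℓ a b) (iℓLin a b), II1 a b, II1 b a, II2 a b]
  have e2 : ∀ c, ∫ ω, ℓ ω c - Q ω c ∂κ = ∫ ω, ℓ ω c ∂κ := by
    intro c
    have hcongr : (fun ω => ℓ ω c - Q ω c) =ᵐ[κ] fun ω => ℓ ω c - Lin c ω := by
      filter_upwards [hQae' c] with ω h1
      rw [h1]
    rw [integral_congr_ae hcongr, integral_sub (iℓ c) (iLin c), II3 c, sub_zero]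
  rw [e1, e2 a, e2 b, hMsymm b a]
  ring

/-- Guaranteed improvement of within-stratum centered calibration under sampling
without replacement: `Σ − Σ_cc = Σ_j ν_j ((1−p_j)/p_j) Var_{0|j}(Q_cc^{(j)}ℓ̃₀)` is
positive semidefinite; equivalently `aᵀ Σ_cc a ≤ aᵀ Σ a` for every `a ∈ ℝ^p`. -/
theorem within_stratum_centered_calibration_improves
    {Ω 𝒱 : Type*} [MeasurableSpace Ω] [MeasurableSpace 𝒱]
    (μ : Measure Ω) [IsProbabilityMeasure μ]
    (V : Ω → 𝒱) (hV : Measurable V)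
    (J p k : ℕ)
    (Vset : Fin J → Set 𝒱) (hVmeas : ∀ j, MeasurableSet (Vset j))
    (hdisj : Pairwise (Function.onFun Disjoint Vset))
    (hcover : (⋃ j, Vset j) = Set.univ)
    (ν : Fin J → ℝ) (hν : ∀ j, ν j = (μ (V ⁻¹' Vset j)).toReal)
    (hνpos : ∀ j, 0 < ν j)
    (pj : Fin J → ℝ) (hpj : ∀ j, pj j ∈ Set.Ioo (0 : ℝ) 1)
    (ℓ : Ω → Fin p → ℝ) (hℓ : ∀ a, MemLp (fun ω => ℓ ω a) 2 μ)
    (I₀inv : Matrix (Fin p) (Fin p) ℝ) (hI₀inv : I₀inv.IsSymm)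
    (g : 𝒱 → Fin k → ℝ) (Z : Ω → Fin k → ℝ) (hZ : ∀ ω, Z ω = g (V ω))
    (hZmeas : ∀ a, Measurable fun ω => Z ω a)
    (CZ : ℝ) (hZbd : ∀ ω a, |Z ω a| ≤ CZ)
    (μZ : Fin J → Fin k → ℝ)
    (hμZ : ∀ j a, μZ j a = ∫ ω, Z ω a ∂(μ[|V ⁻¹' Vset j]))
    (A : Fin J → Matrix (Fin k) (Fin k) ℝ)
    (hA : ∀ j a b, A j a b =
      ∫ ω, (Z ω a - μZ j a) * (Z ω b - μZ j b) ∂(μ[|V ⁻¹' Vset j]))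
    (hAinv : ∀ j, IsUnit (A j).det)
    (Q : Fin J → Ω → Fin p → ℝ)
    (hQ : ∀ j ω a, Q j ω a =
      ∑ b, ∑ c, (∫ ω', ℓ ω' a * (Z ω' b - μZ j b) ∂(μ[|V ⁻¹' Vset j])) * (A j)⁻¹ b c *
        ((Vset j).indicator (fun _ => (1 : ℝ)) (V ω) * (Z ω c - μZ j c))) :
    -- Σ − Σ_cc is positive semidefinite, equivalently aᵀ Σ_cc a ≤ aᵀ Σ a
    ((Matrix.of fun a b =>
        I₀inv a b + ∑ j, ν j * ((1 - pj j) / pj j) *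
          ((∫ ω, ℓ ω a * ℓ ω b ∂(μ[|V ⁻¹' Vset j]))
            - (∫ ω, ℓ ω a ∂(μ[|V ⁻¹' Vset j])) * (∫ ω, ℓ ω b ∂(μ[|V ⁻¹' Vset j]))))
      - (Matrix.of fun a b =>
          I₀inv a b + ∑ j, ν j * ((1 - pj j) / pj j) *
            ((∫ ω, (ℓ ω a - Q j ω a) * (ℓ ω b - Q j ω b) ∂(μ[|V ⁻¹' Vset j]))
              - (∫ ω, ℓ ω a - Q j ω a ∂(μ[|V ⁻¹' Vset j]))
                * (∫ ω, ℓ ω b - Q j ω b ∂(μ[|V ⁻¹' Vset j]))))).PosSemidef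
    ∧ ∀ a : Fin p → ℝ,
        a ⬝ᵥ (Matrix.of fun i i' =>
            I₀inv i i' + ∑ j, ν j * ((1 - pj j) / pj j) *
              ((∫ ω, (ℓ ω i - Q j ω i) * (ℓ ω i' - Q j ω i') ∂(μ[|V ⁻¹' Vset j]))
                - (∫ ω, ℓ ω i - Q j ω i ∂(μ[|V ⁻¹' Vset j]))
                  * (∫ ω, ℓ ω i' - Q j ω i' ∂(μ[|V ⁻¹' Vset j])))).mulVec a
        ≤ a ⬝ᵥ (Matrix.of fun i i' =>
            I₀inv i i' + ∑ j, ν j * ((1 - pj j) / pj j) *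
              ((∫ ω, ℓ ω i * ℓ ω i' ∂(μ[|V ⁻¹' Vset j]))
                - (∫ ω, ℓ ω i ∂(μ[|V ⁻¹' Vset j]))
                  * (∫ ω, ℓ ω i' ∂(μ[|V ⁻¹' Vset j])))).mulVec a := by
  classical
  have hsm : ∀ j : Fin J, MeasurableSet (V ⁻¹' Vset j) := fun j => hV (hVmeas j)
  have hμs : ∀ j : Fin J, μ (V ⁻¹' Vset j) ≠ 0 := by
    intro j h
    have h2 := hνpos j
    rw [hν j, h, ENNReal.toReal_zero] at h2
    exact lt_irrefl _ h2
  have hprob : ∀ j, IsProbabilityMeasure (μ[|V ⁻¹' Vset j]) :=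
    fun j => cond_isProbabilityMeasure (hμs j)
  have hael : ∀ j : Fin J, ∀ᵐ ω ∂(μ[|V ⁻¹' Vset j]),
      (Vset j).indicator (fun _ => (1:ℝ)) (V ω) = 1 := by
    intro j
    have h0 : (μ[|V ⁻¹' Vset j]) ((V ⁻¹' Vset j)ᶜ) = 0 := by
      rw [ProbabilityTheory.cond_apply (hsm j)]
      simp
    filter_upwards [measure_eq_zero_iff_ae_notMem.mp h0] with ω hω
    have hmem : V ω ∈ Vset j := by simpa using hω
    simp [Set.indicator_of_mem hmem]
  have key : ∀ j : Fin J, ∃ M : Matrix (Fin p) (Fin p) ℝ,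
      (∀ a b, ((∫ ω, ℓ ω a * ℓ ω b ∂(μ[|V ⁻¹' Vset j]))
            - (∫ ω, ℓ ω a ∂(μ[|V ⁻¹' Vset j])) * (∫ ω, ℓ ω b ∂(μ[|V ⁻¹' Vset j])))
        - ((∫ ω, (ℓ ω a - Q j ω a) * (ℓ ω b - Q j ω b) ∂(μ[|V ⁻¹' Vset j]))
            - (∫ ω, ℓ ω a - Q j ω a ∂(μ[|V ⁻¹' Vset j]))
              * (∫ ω, ℓ ω b - Q j ω b ∂(μ[|V ⁻¹' Vset j]))) = M a b)
      ∧ (∀ a b, M a b = M b a)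
      ∧ ∀ x : Fin p → ℝ, 0 ≤ ∑ a, ∑ b, x a * M a b * x b := by
    intro j
    haveI := hprob j
    refine stratum_key ℓ (fun a => ?_) Z hZmeas CZ hZbd (μZ j) (hμZ j) (A j) (hA j)
      (hAinv j) (Q j) (fun a => ?_)
    · exact ((hℓ a).restrict _).smul_measure (ENNReal.inv_ne_top.mpr (hμs j))
    · filter_upwards [hael j] with ω hω
      rw [hQ j ω a]
      refine Finset.sum_congr rfl fun b _ => Finset.sum_congr rfl fun c _ => ?_
      rw [hω, one_mul]
  choose M hMeq hMsymm hMpsd using key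
  set w : Fin J → ℝ := fun j => ν j * ((1 - pj j) / pj j) with hwdef
  have hwpos : ∀ j, 0 ≤ w j := by
    intro j
    have h1 := (hpj j).1
    have h2 := (hpj j).2
    exact mul_nonneg (hνpos j).le (div_nonneg (by linarith) h1.le)
  have hdiff : ((Matrix.of fun a b =>
        I₀inv a b + ∑ j, w j *
          ((∫ ω, ℓ ω a * ℓ ω b ∂(μ[|V ⁻¹' Vset j]))
            - (∫ ω, ℓ ω a ∂(μ[|V ⁻¹' Vset j])) * (∫ ω, ℓ ω b ∂(μ[|V ⁻¹' Vset j]))))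
      - (Matrix.of fun a b =>
          I₀inv a b + ∑ j, w j *
            ((∫ ω, (ℓ ω a - Q j ω a) * (ℓ ω b - Q j ω b) ∂(μ[|V ⁻¹' Vset j]))
              - (∫ ω, ℓ ω a - Q j ω a ∂(μ[|V ⁻¹' Vset j]))
                * (∫ ω, ℓ ω b - Q j ω b ∂(μ[|V ⁻¹' Vset j])))))
      = Matrix.of (fun a b => ∑ j, w j * M j a b) := by
    ext a b
    simp only [Matrix.sub_apply, Matrix.of_apply]
    rw [add_sub_add_left_eq_sub, ← Finset.sum_sub_distrib]
    refine Finset.sum_congr rfl fun j _ => ?_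
    rw [← mul_sub, hMeq j a b]
  have hquad : ∀ x : Fin p → ℝ,
      0 ≤ x ⬝ᵥ (Matrix.of fun a b => ∑ j, w j * M j a b) *ᵥ x := by
    intro x
    have hexp : x ⬝ᵥ (Matrix.of fun a b => ∑ j, w j * M j a b) *ᵥ x
        = ∑ j, w j * ∑ a, ∑ b, x a * M j a b * x b := by
      simp only [dotProduct, Matrix.mulVec, Matrix.of_apply]
      calc ∑ a, x a * ∑ b, (∑ j, w j * M j a b) * x b
          = ∑ a, ∑ b, ∑ j, x a * (w j * M j a b * x b) := by
            refine Finset.sum_congr rfl fun a _ => ?_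
            rw [Finset.mul_sum]
            refine Finset.sum_congr rfl fun b _ => ?_
            rw [Finset.sum_mul, Finset.mul_sum]
        _ = ∑ j, ∑ a, ∑ b, x a * (w j * M j a b * x b) := by
            have h1 : ∀ a, ∑ b, ∑ j, x a * (w j * M j a b * x b)
                = ∑ j, ∑ b, x a * (w j * M j a b * x b) := fun a => Finset.sum_comm
            simp_rw [h1]
            exact Finset.sum_comm
        _ = ∑ j, w j * ∑ a, ∑ b, x a * M j a b * x b := by
            refine Finset.sum_congr rfl fun j _ => ?_
            rw [Finset.mul_sum]
            refine Finset.sum_congr rfl fun a _ => ?_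
            rw [Finset.mul_sum]
            exact Finset.sum_congr rfl fun b _ => by ring
    rw [hexp]
    exact Finset.sum_nonneg fun j _ => mul_nonneg (hwpos j) (hMpsd j x)
  constructor
  · rw [hdiff]
    rw [Matrix.posSemidef_iff_dotProduct_mulVec]; constructor
    · ext a b
      simp only [Matrix.conjTranspose_apply, Matrix.of_apply, star_trivial]
      exact Finset.sum_congr rfl fun j _ => by rw [hMsymm j b a]
    · intro x
      have hx : star x = x := by
        funext i; simp
      rw [hx]
      exact hquad x
  · intro x
    have h := hquad x
    rw [← hdiff, Matrix.sub_mulVec, dotProduct_sub] at h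
    linarith
end

section
/- (Lemma 5.2, weighted Kullback–Leibler / Hellinger bound for calibrated log-likelihoods.) There exist constants K₁ > 0 and K₂ < ∞, depending only on c₀, C_Z, m₁, M₁, M₂, such that for all θ ∈ Θ and all α ∈ ℝ^k: E[ G(Zᵀα) ( log p_θ(X) − log p_{θ₀}(X) ) ] ≤ −K₁ h(θ, θ₀)² + K₂ |α|². -/
open MeasureTheory ProbabilityTheory Finset
open scoped ENNReal NNReal

lemma wkl_aux (c₀ t a b : ℝ) (hc : 1 ≤ c₀) (ht : 0 ≤ t) (ha : 0 ≤ a) (hb : 0 ≤ b)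
    (h1 : a ≤ c₀ * b) (h2 : b ≤ c₀ * a) :
    ((Real.log a - Real.log b) * b ≤ 2 * (Real.sqrt a * Real.sqrt b - b)) ∧
    (|Real.log a - Real.log b| ≤ Real.log c₀) ∧
    (t * (|Real.log a - Real.log b| * b) ≤
      (Real.sqrt a - Real.sqrt b) ^ 2 / 2 + 2 * c₀ * t ^ 2 * b) := by
  have hc0 : 0 < c₀ := lt_of_lt_of_le one_pos hc
  rcases eq_or_lt_of_le hb with hb0 | hbpos
  · have ha0 : a = 0 := le_antisymm (by nlinarith) ha
    rw [← hb0, ha0]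
    simp [Real.log_nonneg hc]
  · have hapos : 0 < a := by nlinarith
    have sa := Real.sqrt_pos.mpr hapos
    have sb := Real.sqrt_pos.mpr hbpos
    have hsa2 : Real.sqrt a ^ 2 = a := Real.sq_sqrt ha
    have hsb2 : Real.sqrt b ^ 2 = b := Real.sq_sqrt hb
    have hlog2 : Real.log a - Real.log b = 2 * Real.log (Real.sqrt a / Real.sqrt b) := by
      rw [Real.log_div sa.ne' sb.ne', Real.log_sqrt ha, Real.log_sqrt hb]; ring
    have hdiv : Real.sqrt a / Real.sqrt b * b = Real.sqrt a * Real.sqrt b := by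
      rw [div_mul_eq_mul_div, mul_div_assoc, Real.div_sqrt]
    refine ⟨?_, ?_, ?_⟩
    · have h := Real.log_le_sub_one_of_pos (div_pos sa sb)
      calc (Real.log a - Real.log b) * b
          = 2 * Real.log (Real.sqrt a / Real.sqrt b) * b := by rw [hlog2]
        _ ≤ 2 * (Real.sqrt a / Real.sqrt b - 1) * b := by nlinarith
        _ = 2 * (Real.sqrt a * Real.sqrt b - b) := by rw [mul_assoc, sub_mul, hdiv]; ring
    · rw [abs_le]
      constructor
      · have := Real.log_le_log hbpos h2
        rw [Real.log_mul hc0.ne' hapos.ne'] at this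
        linarith
      · have := Real.log_le_log hapos h1
        rw [Real.log_mul hc0.ne' hbpos.ne'] at this
        linarith
    · have hsc : 1 ≤ Real.sqrt c₀ := Real.one_le_sqrt.mpr hc
      have hsc2 : Real.sqrt c₀ ^ 2 = c₀ := Real.sq_sqrt hc0.le
      set s := Real.sqrt a / Real.sqrt b with hs
      have hspos : 0 < s := div_pos sa sb
      -- 1/s ≤ √c₀
      have hinv : s⁻¹ ≤ Real.sqrt c₀ := by
        have : Real.sqrt b ≤ Real.sqrt c₀ * Real.sqrt a := by
          rw [← Real.sqrt_mul hc0.le]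
          exact Real.sqrt_le_sqrt h2
        rw [hs, inv_div, div_le_iff₀ sa]
        linarith [this]
      have key : |Real.log s| ≤ Real.sqrt c₀ * |s - 1| := by
        rcases le_or_gt 1 s with h1s | h1s
        · rw [abs_of_nonneg (Real.log_nonneg h1s), abs_of_nonneg (by linarith)]
          have := Real.log_le_sub_one_of_pos hspos
          nlinarith
        · rw [abs_of_nonpos (Real.log_nonpos hspos.le h1s.le),
            abs_of_neg (by linarith : s - 1 < 0)]
          have hli := Real.log_le_sub_one_of_pos (inv_pos.mpr hspos)
          rw [Real.log_inv] at hli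
          have hss : s * s⁻¹ = 1 := mul_inv_cancel₀ hspos.ne'
          nlinarith [mul_le_mul_of_nonneg_left hinv (by linarith : (0:ℝ) ≤ 1 - s)]
      have habs : |Real.log a - Real.log b| * b
          ≤ 2 * Real.sqrt c₀ * (|Real.sqrt a - Real.sqrt b| * Real.sqrt b) := by
        have h1' : |Real.log a - Real.log b| = 2 * |Real.log s| := by
          rw [hlog2, abs_mul, abs_two]
        have h2' : |s - 1| * b = |Real.sqrt a - Real.sqrt b| * Real.sqrt b := by
          have : s - 1 = (Real.sqrt a - Real.sqrt b) / Real.sqrt b := by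
            rw [hs]; field_simp
          rw [this, abs_div, abs_of_nonneg sb.le, div_mul_eq_mul_div, mul_div_assoc,
            show b / Real.sqrt b = Real.sqrt b from Real.div_sqrt]
        calc |Real.log a - Real.log b| * b = 2 * |Real.log s| * b := by rw [h1']
          _ ≤ 2 * (Real.sqrt c₀ * |s - 1|) * b := by nlinarith
          _ = 2 * Real.sqrt c₀ * (|s - 1| * b) := by ring
          _ = 2 * Real.sqrt c₀ * (|Real.sqrt a - Real.sqrt b| * Real.sqrt b) := by rw [h2']
      have hAM := two_mul_le_add_sq (|Real.sqrt a - Real.sqrt b|)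
        (2 * Real.sqrt c₀ * t * Real.sqrt b)
      have hsq : |Real.sqrt a - Real.sqrt b| ^ 2 = (Real.sqrt a - Real.sqrt b) ^ 2 := sq_abs _
      have hv2 : (2 * Real.sqrt c₀ * t * Real.sqrt b) ^ 2 = 4 * c₀ * t ^ 2 * b := by
        rw [mul_pow, mul_pow, mul_pow, hsc2, hsb2]; ring
      nlinarith [abs_nonneg (Real.sqrt a - Real.sqrt b), mul_le_mul_of_nonneg_left habs ht]


/-- Lemma 5.2 (weighted Kullback–Leibler / Hellinger bound for calibrated
log-likelihoods): for a family of densities with likelihood ratios bounded between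
`c₀⁻¹` and `c₀`, a bounded calibration variable `Z = g(V)` and a calibration link `G`
with `m₁ ≤ G ≤ M₁`, `G(0) = 1`, `0 < Ġ ≤ M₂`, there exist constants `K₁ > 0` and
`K₂ < ∞` such that for all `θ` and all `α ∈ ℝ^k`:
`E[G(Zᵀα)(log p_θ(X) − log p_{θ₀}(X))] ≤ −K₁ h(θ,θ₀)² + K₂|α|²`. -/
theorem weighted_KL_Hellinger_bound
    {𝒳 Θ 𝒱 Ω : Type*} [MeasurableSpace 𝒳] [MeasurableSpace 𝒱] [MeasurableSpace Ω]
    (k : ℕ)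
    (μ : Measure 𝒳) [SigmaFinite μ]
    (p : Θ → 𝒳 → ℝ) (θ₀ : Θ)
    (hpmeas : ∀ θ, Measurable (p θ))
    (hpnonneg : ∀ θ x, 0 ≤ p θ x)
    (hpdens : ∀ θ, ∫⁻ x, ENNReal.ofReal (p θ x) ∂μ = 1)
    (c₀ : ℝ) (hc₀ : 1 ≤ c₀)
    (hratio : ∀ θ, ∀ᵐ x ∂μ, p θ x ≤ c₀ * p θ₀ x ∧ p θ₀ x ≤ c₀ * p θ x)
    -- the probability space carrying `(V, X)` with `X ∼ p_{θ₀} dμ`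
    (P : Measure Ω) [IsProbabilityMeasure P]
    (V : Ω → 𝒱) (X : Ω → 𝒳) (hV : Measurable V) (hX : Measurable X)
    (hXlaw : P.map X = μ.withDensity (fun x => ENNReal.ofReal (p θ₀ x)))
    (g : 𝒱 → Fin k → ℝ) (Z : Ω → Fin k → ℝ) (hZ : ∀ ω, Z ω = g (V ω))
    (hZmeas : ∀ a, Measurable fun ω => Z ω a)
    (CZ : ℝ) (hZbd : ∀ ω, ∑ a, (Z ω a) ^ 2 ≤ CZ ^ 2)
    -- the calibration link function `G` of Condition 2
    (G G' : ℝ → ℝ) (m₁ M₁ M₂ : ℝ) (hm₁ : 0 < m₁) (hM₁ : m₁ ≤ M₁)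
    (hGbd : ∀ x, G x ∈ Set.Icc m₁ M₁) (hG0 : G 0 = 1)
    (hG : ∀ x, HasDerivAt G (G' x) x)
    (hG' : ∀ x, 0 < G' x ∧ G' x ≤ M₂) :
    ∃ K₁ : ℝ, 0 < K₁ ∧ ∃ K₂ : ℝ, ∀ θ : Θ, ∀ α : Fin k → ℝ,
      ∫ ω, G (∑ a, Z ω a * α a) * (Real.log (p θ (X ω)) - Real.log (p θ₀ (X ω))) ∂P
        ≤ -K₁ * ((1 / 2) * ∫ x, (Real.sqrt (p θ x) - Real.sqrt (p θ₀ x)) ^ 2 ∂μ)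
          + K₂ * (∑ a, (α a) ^ 2) := by
  -- basic constants
  have hM₂ : 0 < M₂ := lt_of_lt_of_le (hG' 0).1 (hG' 0).2
  have hc₀pos : (0 : ℝ) < c₀ := lt_of_lt_of_le one_pos hc₀
  have hlogc₀ : 0 ≤ Real.log c₀ := Real.log_nonneg hc₀
  have hM₁pos : 0 < M₁ := lt_of_lt_of_le hm₁ hM₁
  -- G is continuous and |G w - 1| ≤ M₂ |w|
  have hGcont : Continuous G := by
    rw [continuous_iff_continuousAt]; exact fun x => (hG x).continuousAt
  have hGlip : ∀ w : ℝ, |G w - 1| ≤ M₂ * |w| := by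
    intro w
    have := Convex.norm_image_sub_le_of_norm_hasDerivWithin_le
      (f := G) (f' := G') (s := Set.univ)
      (fun x _ => (hG x).hasDerivWithinAt)
      (fun x _ => by rw [Real.norm_eq_abs, abs_of_pos (hG' x).1]; exact (hG' x).2)
      convex_univ (Set.mem_univ 0) (Set.mem_univ w)
    simpa [hG0, Real.norm_eq_abs] using this
  have hGabs : ∀ w : ℝ, |G w| ≤ M₁ := fun w =>
    abs_le.mpr ⟨by linarith [(hGbd w).1, hm₁.le], (hGbd w).2⟩
  -- integrability of the densities
  have Ip : ∀ θ', Integrable (p θ') μ := by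
    intro θ'
    refine ⟨(hpmeas θ').aestronglyMeasurable, ?_⟩
    rw [hasFiniteIntegral_iff_norm]
    have : ∀ x, ENNReal.ofReal ‖p θ' x‖ = ENNReal.ofReal (p θ' x) := fun x => by
      rw [Real.norm_eq_abs, abs_of_nonneg (hpnonneg θ' x)]
    simp_rw [this, hpdens θ']
    exact ENNReal.one_lt_top
  have intp : ∀ θ', ∫ x, p θ' x ∂μ = 1 := by
    intro θ'
    rw [integral_eq_lintegral_of_nonneg_ae (ae_of_all μ (hpnonneg θ'))
      (hpmeas θ').aestronglyMeasurable, hpdens θ']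
    simp
  -- change of variables
  have COV : ∀ (φ : 𝒳 → ℝ), Measurable φ →
      ∫ ω, φ (X ω) ∂P = ∫ x, φ x * p θ₀ x ∂μ := by
    intro φ hφ
    rw [← integral_map hX.aemeasurable hφ.aestronglyMeasurable, hXlaw]
    have h1 : (fun x => ENNReal.ofReal (p θ₀ x))
        = fun x => ((p θ₀ x).toNNReal : ℝ≥0∞) := by
      funext x; rfl
    rw [h1, integral_withDensity_eq_integral_smul (hpmeas θ₀).real_toNNReal φ]
    congr 1; funext x
    rw [NNReal.smul_def, smul_eq_mul, Real.coe_toNNReal _ (hpnonneg θ₀ x), mul_comm]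
  -- a.e. transfer from μ to P through X
  have transfer : ∀ (Q : 𝒳 → Prop), MeasurableSet {x | Q x} → (∀ᵐ x ∂μ, Q x) →
      (∀ᵐ ω ∂P, Q (X ω)) := by
    intro Q hQm hQ
    have h1 : ∀ᵐ x ∂(P.map X), Q x := by
      rw [hXlaw]
      exact hQ.filter_mono (withDensity_absolutelyContinuous μ _).ae_le
    exact (ae_map_iff hX.aemeasurable hQm).mp h1
  refine ⟨1, one_pos, 2 * c₀ * M₂ ^ 2 * CZ ^ 2, fun θ α => ?_⟩
  -- notation
  set L : 𝒳 → ℝ := fun x => Real.log (p θ x) - Real.log (p θ₀ x) with hL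
  have hLmeas : Measurable L :=
    (Real.measurable_log.comp (hpmeas θ)).sub (Real.measurable_log.comp (hpmeas θ₀))
  set S : ℝ := ∑ a, (α a) ^ 2 with hSdef
  have hS : 0 ≤ S := Finset.sum_nonneg fun a _ => sq_nonneg _
  set t : ℝ := M₂ * |CZ| * Real.sqrt S with htdef
  have ht : 0 ≤ t := by positivity
  set D : ℝ := ∫ x, (Real.sqrt (p θ x) - Real.sqrt (p θ₀ x)) ^ 2 ∂μ with hD
  -- Cauchy–Schwarz bound on the weight
  have hW : ∀ ω, |∑ a, Z ω a * α a| ≤ |CZ| * Real.sqrt S := by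
    intro ω
    have h1 : (∑ a, Z ω a * α a) ^ 2 ≤ CZ ^ 2 * S :=
      le_trans (Finset.sum_mul_sq_le_sq_mul_sq Finset.univ _ _)
        (mul_le_mul_of_nonneg_right (hZbd ω) hS)
    calc |∑ a, Z ω a * α a| = Real.sqrt ((∑ a, Z ω a * α a) ^ 2) :=
          (Real.sqrt_sq_eq_abs _).symm
      _ ≤ Real.sqrt (CZ ^ 2 * S) := Real.sqrt_le_sqrt h1
      _ = |CZ| * Real.sqrt S := by rw [Real.sqrt_mul (sq_nonneg _), Real.sqrt_sq_eq_abs]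
  -- pointwise bound on Ω
  have hpt : ∀ ω, G (∑ a, Z ω a * α a) * L (X ω) ≤ L (X ω) + t * |L (X ω)| := by
    intro ω
    set w := ∑ a, Z ω a * α a with hw
    have h1 : (G w - 1) * L (X ω) ≤ t * |L (X ω)| := by
      calc (G w - 1) * L (X ω) ≤ |(G w - 1) * L (X ω)| := le_abs_self _
        _ = |G w - 1| * |L (X ω)| := abs_mul _ _
        _ ≤ (M₂ * |w|) * |L (X ω)| :=
            mul_le_mul_of_nonneg_right (hGlip w) (abs_nonneg _)
        _ ≤ (M₂ * (|CZ| * Real.sqrt S)) * |L (X ω)| := by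
            have := hW ω
            have h2 : M₂ * |w| ≤ M₂ * (|CZ| * Real.sqrt S) :=
              mul_le_mul_of_nonneg_left (hW ω) hM₂.le
            exact mul_le_mul_of_nonneg_right h2 (abs_nonneg _)
        _ = t * |L (X ω)| := by rw [htdef]; ring
    nlinarith [h1]
  -- a.e. facts from the likelihood-ratio bound
  have haefacts := (hratio θ).mono (fun x hx =>
    wkl_aux c₀ t (p θ x) (p θ₀ x) hc₀ ht (hpnonneg θ x) (hpnonneg θ₀ x) hx.1 hx.2)
  have fact1 : ∀ᵐ x ∂μ, L x * p θ₀ x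
      ≤ 2 * (Real.sqrt (p θ x) * Real.sqrt (p θ₀ x) - p θ₀ x) :=
    haefacts.mono fun x hx => hx.1
  have fact2 : ∀ᵐ x ∂μ, t * (|L x| * p θ₀ x)
      ≤ (Real.sqrt (p θ x) - Real.sqrt (p θ₀ x)) ^ 2 / 2 + 2 * c₀ * t ^ 2 * p θ₀ x :=
    haefacts.mono fun x hx => hx.2.2
  have fact3 : ∀ᵐ x ∂μ, |L x| ≤ Real.log c₀ :=
    haefacts.mono fun x hx => hx.2.1
  -- integrabilities on μ
  have Ipp : Integrable (fun x => p θ x + p θ₀ x) μ := (Ip θ).add (Ip θ₀)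
  have Isqrt : Integrable (fun x => Real.sqrt (p θ x) * Real.sqrt (p θ₀ x)) μ := by
    refine Integrable.mono' Ipp
      (((hpmeas θ).sqrt.mul (hpmeas θ₀).sqrt).aestronglyMeasurable)
      (ae_of_all μ fun x => ?_)
    have h1 := two_mul_le_add_sq (Real.sqrt (p θ x)) (Real.sqrt (p θ₀ x))
    rw [Real.sq_sqrt (hpnonneg θ x), Real.sq_sqrt (hpnonneg θ₀ x)] at h1
    rw [Real.norm_eq_abs, abs_of_nonneg (mul_nonneg (Real.sqrt_nonneg _) (Real.sqrt_nonneg _))]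
    show Real.sqrt (p θ x) * Real.sqrt (p θ₀ x) ≤ p θ x + p θ₀ x
    nlinarith [mul_nonneg (Real.sqrt_nonneg (p θ x)) (Real.sqrt_nonneg (p θ₀ x))]
  have Isq : Integrable (fun x => (Real.sqrt (p θ x) - Real.sqrt (p θ₀ x)) ^ 2) μ := by
    refine Integrable.mono' Ipp
      (((hpmeas θ).sqrt.sub (hpmeas θ₀).sqrt).pow_const 2).aestronglyMeasurable
      (ae_of_all μ fun x => ?_)
    rw [Real.norm_eq_abs, abs_of_nonneg (sq_nonneg _), sub_sq,
      Real.sq_sqrt (hpnonneg θ x), Real.sq_sqrt (hpnonneg θ₀ x)]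
    show p θ x - 2 * Real.sqrt (p θ x) * Real.sqrt (p θ₀ x) + p θ₀ x ≤ p θ x + p θ₀ x
    nlinarith [mul_nonneg (Real.sqrt_nonneg (p θ x)) (Real.sqrt_nonneg (p θ₀ x))]
  have ILp : Integrable (fun x => L x * p θ₀ x) μ := by
    refine Integrable.mono' ((Ip θ₀).const_mul (Real.log c₀))
      (hLmeas.mul (hpmeas θ₀)).aestronglyMeasurable
      (fact3.mono fun x hx => ?_)
    rw [Real.norm_eq_abs, abs_mul, abs_of_nonneg (hpnonneg θ₀ x)]
    exact mul_le_mul_of_nonneg_right hx (hpnonneg θ₀ x)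
  have IaLp : Integrable (fun x => |L x| * p θ₀ x) μ := by
    refine Integrable.mono' ((Ip θ₀).const_mul (Real.log c₀))
      (hLmeas.abs.mul (hpmeas θ₀)).aestronglyMeasurable
      (fact3.mono fun x hx => ?_)
    rw [Real.norm_eq_abs, abs_mul, abs_abs, abs_of_nonneg (hpnonneg θ₀ x)]
    exact mul_le_mul_of_nonneg_right hx (hpnonneg θ₀ x)
  -- the Hellinger identity
  have hDid : D = 2 - 2 * ∫ x, Real.sqrt (p θ x) * Real.sqrt (p θ₀ x) ∂μ := by
    have hfun : ∀ x, (Real.sqrt (p θ x) - Real.sqrt (p θ₀ x)) ^ 2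
        = p θ x + p θ₀ x - 2 * (Real.sqrt (p θ x) * Real.sqrt (p θ₀ x)) := by
      intro x
      rw [sub_sq, Real.sq_sqrt (hpnonneg θ x), Real.sq_sqrt (hpnonneg θ₀ x)]
      ring
    rw [hD]
    simp_rw [hfun]
    rw [integral_sub Ipp (Isqrt.const_mul 2),
      integral_add (Ip θ) (Ip θ₀), intp θ, intp θ₀,
      integral_const_mul]
    ring
  -- Step 3 : KL-type bound
  have hstep3 : ∫ x, L x * p θ₀ x ∂μ ≤ -D := by
    have h1 : ∫ x, L x * p θ₀ x ∂μ
        ≤ ∫ x, 2 * (Real.sqrt (p θ x) * Real.sqrt (p θ₀ x) - p θ₀ x) ∂μ :=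
      integral_mono_ae ILp ((Isqrt.sub (Ip θ₀)).const_mul 2) fact1
    have h2 : ∫ x, 2 * (Real.sqrt (p θ x) * Real.sqrt (p θ₀ x) - p θ₀ x) ∂μ
        = 2 * ((∫ x, Real.sqrt (p θ x) * Real.sqrt (p θ₀ x) ∂μ) - 1) := by
      rw [integral_const_mul, integral_sub Isqrt (Ip θ₀), intp θ₀]
    rw [h2] at h1
    rw [hDid]
    linarith
  -- Step 4 : weighted absolute-value bound
  have hstep4 : t * ∫ x, |L x| * p θ₀ x ∂μ ≤ D / 2 + 2 * c₀ * t ^ 2 := by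
    have h1 : ∫ x, t * (|L x| * p θ₀ x) ∂μ
        ≤ ∫ x, ((Real.sqrt (p θ x) - Real.sqrt (p θ₀ x)) ^ 2 / 2
          + 2 * c₀ * t ^ 2 * p θ₀ x) ∂μ :=
      integral_mono_ae (IaLp.const_mul t)
        ((Isq.div_const 2).add ((Ip θ₀).const_mul (2 * c₀ * t ^ 2))) fact2
    rw [integral_const_mul] at h1
    rw [integral_add (Isq.div_const 2) ((Ip θ₀).const_mul (2 * c₀ * t ^ 2)),
      integral_div, integral_const_mul, intp θ₀] at h1
    rw [← hD] at h1
    linarith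
  -- integrability on Ω
  have haeLX : ∀ᵐ ω ∂P, |L (X ω)| ≤ Real.log c₀ := by
    refine transfer (fun x => |L x| ≤ Real.log c₀) ?_ fact3
    exact measurableSet_le hLmeas.abs measurable_const
  have ILX : Integrable (fun ω => L (X ω)) P := by
    refine Integrable.mono' (integrable_const (Real.log c₀))
      (hLmeas.comp hX).aestronglyMeasurable (haeLX.mono fun ω hω => ?_)
    rwa [Real.norm_eq_abs]
  have IaLX : Integrable (fun ω => |L (X ω)|) P := ILX.abs
  have IGLX : Integrable
      (fun ω => G (∑ a, Z ω a * α a) * L (X ω)) P := by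
    refine Integrable.mono' (integrable_const (M₁ * Real.log c₀))
      ?_ (haeLX.mono fun ω hω => ?_)
    · exact ((hGcont.measurable.comp
        (Finset.measurable_sum Finset.univ fun a _ => (hZmeas a).mul_const (α a))).mul
        (hLmeas.comp hX)).aestronglyMeasurable
    · rw [Real.norm_eq_abs, abs_mul]
      exact mul_le_mul (hGabs _) hω (abs_nonneg _) hM₁pos.le
  -- main chain
  have hmain : ∫ ω, G (∑ a, Z ω a * α a) * L (X ω) ∂P
      ≤ (∫ x, L x * p θ₀ x ∂μ) + t * ∫ x, |L x| * p θ₀ x ∂μ := by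
    have h1 : ∫ ω, G (∑ a, Z ω a * α a) * L (X ω) ∂P
        ≤ ∫ ω, (L (X ω) + t * |L (X ω)|) ∂P :=
      integral_mono IGLX (ILX.add (IaLX.const_mul t)) hpt
    rw [integral_add ILX (IaLX.const_mul t), integral_const_mul] at h1
    rw [COV L hLmeas, COV (fun x => |L x|) hLmeas.abs] at h1
    exact h1
  have ht2 : t ^ 2 = M₂ ^ 2 * CZ ^ 2 * S := by
    rw [htdef, mul_pow, mul_pow, Real.sq_sqrt hS, sq_abs]
  calc ∫ ω, G (∑ a, Z ω a * α a) * L (X ω) ∂P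
      ≤ (∫ x, L x * p θ₀ x ∂μ) + t * ∫ x, |L x| * p θ₀ x ∂μ := hmain
    _ ≤ -D + (D / 2 + 2 * c₀ * t ^ 2) := add_le_add hstep3 hstep4
    _ = -1 * ((1 / 2) * D) + (2 * c₀ * M₂ ^ 2 * CZ ^ 2) * S := by rw [ht2]; ring
end

section
/- (Kullback–Leibler inequality from the consistency proof of Theorem 4.3.) Let μ be a σ-finite measure and let p₀ and p be nonnegative measurable functions with ∫ p₀ dμ = ∫ p dμ = 1; set P₀ := p₀ · μ. Then for every α ∈ (0,1): log(1−α) ≤ ∫ log( 1 − α + α (p/p₀) ) dP₀ ≤ 0, and the second inequality is an equality if and only if p = p₀ μ-almost everywhere. -/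
open MeasureTheory

/-- Kullback–Leibler inequality from the consistency proof of Theorem 4.3: for
densities `p₀`, `p` with respect to a σ-finite measure `μ` and `P₀ := p₀ · μ`, for
every `α ∈ (0,1)`,
`log(1−α) ≤ ∫ log(1 − α + α (p/p₀)) dP₀ ≤ 0`, with equality in the second inequality
if and only if `p = p₀` `μ`-almost everywhere. -/
theorem kullback_leibler_inequality
    {𝒳 : Type*} [MeasurableSpace 𝒳] (μ : Measure 𝒳) [SigmaFinite μ]
    (p₀ p : 𝒳 → ℝ) (hp₀meas : Measurable p₀) (hpmeas : Measurable p)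
    (hp₀nonneg : ∀ x, 0 ≤ p₀ x) (hpnonneg : ∀ x, 0 ≤ p x)
    (hp₀int : ∫⁻ x, ENNReal.ofReal (p₀ x) ∂μ = 1)
    (hpint : ∫⁻ x, ENNReal.ofReal (p x) ∂μ = 1)
    (P₀ : Measure 𝒳) (hP₀ : P₀ = μ.withDensity (fun x => ENNReal.ofReal (p₀ x)))
    (α : ℝ) (hα : α ∈ Set.Ioo (0 : ℝ) 1) :
    Real.log (1 - α) ≤ ∫ x, Real.log (1 - α + α * (p x / p₀ x)) ∂P₀
    ∧ ∫ x, Real.log (1 - α + α * (p x / p₀ x)) ∂P₀ ≤ 0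
    ∧ ((∫ x, Real.log (1 - α + α * (p x / p₀ x)) ∂P₀) = 0 ↔ p =ᵐ[μ] p₀) := by
  obtain ⟨hα0, hα1⟩ := hα
  have hα1' : (0:ℝ) < 1 - α := by linarith
  set g : 𝒳 → ℝ := fun x => p x / p₀ x with hgdef
  have hgmeas : Measurable g := hpmeas.div hp₀meas
  have hgnn : ∀ x, 0 ≤ g x := fun x => div_nonneg (hpnonneg x) (hp₀nonneg x)
  have hq : ∀ x, p₀ x * g x = if p₀ x = 0 then 0 else p x := by
    intro x; by_cases h : p₀ x = 0
    · simp [hgdef, h]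
    · simp only [hgdef, h, if_false]
      field_simp
  have hprob : IsProbabilityMeasure P₀ := by
    constructor
    rw [hP₀, withDensity_apply _ MeasurableSet.univ, setLIntegral_univ, hp₀int]
  -- lintegral of g with respect to P₀
  have hwd : ∫⁻ x, ENNReal.ofReal (g x) ∂P₀
      = ∫⁻ x, ENNReal.ofReal (p₀ x * g x) ∂μ := by
    rw [hP₀, lintegral_withDensity_eq_lintegral_mul _ hp₀meas.ennreal_ofReal
      hgmeas.ennreal_ofReal]
    refine lintegral_congr fun x => ?_
    simp [ENNReal.ofReal_mul (hp₀nonneg x)]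
  have hqle : ∀ x, ENNReal.ofReal (p₀ x * g x) ≤ ENNReal.ofReal (p x) := by
    intro x
    rw [hq x]
    split_ifs with h
    · simp [hpnonneg x]
    · exact le_rfl
  have hlin_le : ∫⁻ x, ENNReal.ofReal (g x) ∂P₀ ≤ 1 := by
    rw [hwd]
    calc ∫⁻ x, ENNReal.ofReal (p₀ x * g x) ∂μ
        ≤ ∫⁻ x, ENNReal.ofReal (p x) ∂μ := lintegral_mono hqle
      _ = 1 := hpint
  have hlin_ne : ∫⁻ x, ENNReal.ofReal (g x) ∂P₀ ≠ ⊤ :=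
    ne_top_of_le_ne_top ENNReal.one_ne_top hlin_le
  have hgint : Integrable g P₀ := by
    refine ⟨hgmeas.aestronglyMeasurable, ?_⟩
    rw [hasFiniteIntegral_iff_ofReal (ae_of_all _ hgnn)]
    exact lt_of_le_of_lt hlin_le ENNReal.one_lt_top
  have hgeq : ∫ x, g x ∂P₀ = (∫⁻ x, ENNReal.ofReal (g x) ∂P₀).toReal :=
    integral_eq_lintegral_of_nonneg_ae (ae_of_all _ hgnn) hgmeas.aestronglyMeasurable
  have hgle1 : ∫ x, g x ∂P₀ ≤ 1 := by
    rw [hgeq]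
    exact ENNReal.toReal_le_of_le_ofReal zero_le_one (by simpa using hlin_le)
  -- the integrand
  set f : 𝒳 → ℝ := fun x => Real.log (1 - α + α * g x) with hfdef
  have htpos : ∀ x, 0 < 1 - α + α * g x := by
    intro x
    have : 0 ≤ α * g x := mul_nonneg hα0.le (hgnn x)
    linarith
  have hfmeas : Measurable f :=
    Real.measurable_log.comp (measurable_const.add (hgmeas.const_mul α))
  have hf_lb : ∀ x, Real.log (1 - α) ≤ f x := fun x =>
    Real.log_le_log hα1' (by nlinarith [mul_nonneg hα0.le (hgnn x)])
  have hf_ub : ∀ x, f x ≤ α * (g x - 1) := by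
    intro x
    have := Real.log_le_sub_one_of_pos (htpos x)
    simpa only [hfdef] using this.trans_eq (by ring)
  have hbint : Integrable (fun x => |Real.log (1 - α)| + α * g x) P₀ :=
    (integrable_const _).add (hgint.const_mul α)
  have hfint : Integrable f P₀ := by
    refine Integrable.mono' hbint hfmeas.aestronglyMeasurable (ae_of_all _ fun x => ?_)
    rw [Real.norm_eq_abs, abs_le]
    constructor
    · have h1 : -(|Real.log (1 - α)| + α * g x) ≤ -|Real.log (1 - α)| := by
        nlinarith [mul_nonneg hα0.le (hgnn x)]
      refine h1.trans ?_
      exact (neg_abs_le _).trans (hf_lb x)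
    · have := hf_ub x
      have h2 : α * (g x - 1) ≤ |Real.log (1 - α)| + α * g x := by
        nlinarith [abs_nonneg (Real.log (1 - α))]
      linarith
  -- lower bound
  have hlow : Real.log (1 - α) ≤ ∫ x, f x ∂P₀ := by
    calc Real.log (1 - α) = ∫ _x, Real.log (1 - α) ∂P₀ := by simp
      _ ≤ ∫ x, f x ∂P₀ := integral_mono (integrable_const _) hfint hf_lb
  -- upper bound
  have hup' : ∫ x, f x ∂P₀ ≤ α * (∫ x, g x ∂P₀ - 1) := by
    calc ∫ x, f x ∂P₀ ≤ ∫ x, α * (g x - 1) ∂P₀ :=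
          integral_mono hfint ((hgint.sub (integrable_const 1)).const_mul α) hf_ub
      _ = α * (∫ x, g x ∂P₀ - 1) := by
          rw [integral_const_mul]
          congr 1
          rw [integral_sub hgint (integrable_const 1)]
          simp
  have hup : ∫ x, f x ∂P₀ ≤ 0 := by
    refine hup'.trans ?_
    nlinarith [hgle1]
  refine ⟨hlow, hup, ?_, ?_⟩
  · -- equality implies p = p₀ a.e.
    intro heq
    set h : 𝒳 → ℝ := fun x => α * (g x - 1) - f x with hhdef
    have hhnn : ∀ x, 0 ≤ h x := fun x => by simpa [hhdef] using hf_ub x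
    have hg1int : Integrable (fun x => α * (g x - 1)) P₀ :=
      (hgint.sub (integrable_const 1)).const_mul α
    have hhint : Integrable h P₀ := hg1int.sub hfint
    have hhval : ∫ x, h x ∂P₀ = α * (∫ x, g x ∂P₀ - 1) := by
      simp only [hhdef]
      rw [integral_sub hg1int hfint, integral_const_mul,
        integral_sub hgint (integrable_const 1)]
      simp [heq]
    have hhle : ∫ x, h x ∂P₀ ≤ 0 := by rw [hhval]; nlinarith [hgle1]
    have hhge : 0 ≤ ∫ x, h x ∂P₀ := integral_nonneg hhnn
    have hhzero : ∫ x, h x ∂P₀ = 0 := le_antisymm hhle hhge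
    -- g = 1 a.e. P₀
    have hae : h =ᵐ[P₀] 0 := (integral_eq_zero_iff_of_nonneg hhnn hhint).1 hhzero
    have hg1 : ∀ᵐ x ∂P₀, g x = 1 := by
      filter_upwards [hae] with x hx
      by_contra hne
      have ht1 : (1 - α + α * g x) ≠ 1 := by
        intro hc
        apply hne
        have : α * g x = α := by linarith
        have := mul_left_cancel₀ (ne_of_gt hα0) (by linarith : α * g x = α * 1)
        linarith
      have := Real.log_lt_sub_one_of_pos (htpos x) ht1
      have hx' : α * (g x - 1) = f x := by
        have : h x = 0 := hx
        simp only [hhdef] at this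
        linarith
      simp only [hfdef] at hx'
      nlinarith
    -- ∫ g dP₀ = 1
    have hgeq1 : ∫ x, g x ∂P₀ = 1 := by
      by_contra hne
      have : ∫ x, g x ∂P₀ < 1 := lt_of_le_of_ne hgle1 hne
      have : ∫ x, h x ∂P₀ < 0 := by rw [hhval]; nlinarith
      linarith
    have hlin1 : ∫⁻ x, ENNReal.ofReal (g x) ∂P₀ = 1 := by
      have := hgeq
      rw [hgeq1] at this
      rw [← ENNReal.ofReal_toReal hlin_ne, ← this]
      simp
    -- p = p₀ * g a.e. μ
    have hsub : ∫⁻ x, (ENNReal.ofReal (p x) - ENNReal.ofReal (p₀ x * g x)) ∂μ = 0 := by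
      rw [lintegral_sub (show Measurable (fun x => ENNReal.ofReal (p₀ x * g x)) from
          (hp₀meas.mul hgmeas).ennreal_ofReal)
        (by rw [← hwd, hlin1]; exact ENNReal.one_ne_top) (ae_of_all _ hqle),
        hpint, ← hwd, hlin1]
      simp
    have hpq : ∀ᵐ x ∂μ, p x = p₀ x * g x := by
      have := (lintegral_eq_zero_iff
        (hpmeas.ennreal_ofReal.sub (hp₀meas.mul hgmeas).ennreal_ofReal)).1 hsub
      filter_upwards [this] with x hx
      simp only [Pi.zero_apply] at hx
      have hle : ENNReal.ofReal (p x) ≤ ENNReal.ofReal (p₀ x * g x) :=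
        tsub_eq_zero_iff_le.1 hx
      have heqq : ENNReal.ofReal (p x) = ENNReal.ofReal (p₀ x * g x) :=
        le_antisymm hle (hqle x)
      exact (ENNReal.ofReal_eq_ofReal_iff (hpnonneg x)
        (mul_nonneg (hp₀nonneg x) (hgnn x))).1 heqq
    -- transfer g = 1 from P₀ to μ on {p₀ ≠ 0}
    have hg1' : ∀ᵐ x ∂μ, ENNReal.ofReal (p₀ x) ≠ 0 → g x = 1 := by
      rw [← ae_withDensity_iff hp₀meas.ennreal_ofReal, ← hP₀]
      exact hg1
    filter_upwards [hpq, hg1'] with x h1 h2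
    by_cases h0 : p₀ x = 0
    · rw [h1, h0]; simp
    · have : ENNReal.ofReal (p₀ x) ≠ 0 := by
        simp [ENNReal.ofReal_eq_zero, not_le, lt_of_le_of_ne (hp₀nonneg x) (Ne.symm h0)]
      rw [h1, h2 this, mul_one]
  · -- p = p₀ a.e. implies integral = 0
    intro heq
    have hac : P₀ ≪ μ := hP₀ ▸ withDensity_absolutelyContinuous μ _
    have hpp : p =ᵐ[P₀] p₀ := heq.filter_mono hac.ae_le
    have hne : ∀ᵐ x ∂P₀, p₀ x ≠ 0 := by
      rw [hP₀, ae_withDensity_iff hp₀meas.ennreal_ofReal]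
      refine ae_of_all _ fun x hx h0 => hx (by simp [h0])
    have : f =ᵐ[P₀] 0 := by
      filter_upwards [hpp, hne] with x h1 h2
      simp [hfdef, hgdef, h1, div_self h2]
    calc ∫ x, f x ∂P₀ = ∫ _x, (0:ℝ) ∂P₀ := integral_congr_ae this
      _ = 0 := integral_zero _ _
end
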